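/- Let A : ℝⁿ → ℝ^{n×n}, b : ℝⁿ → ℝⁿ, and c : ℝⁿ → ℝ be bounded measurable with |A(x)| ≤ Λ, |b(x)| ≤ M, |c(x)| ≤ M for a.e. x, and for functions v, w define L(v, w) := ∫_{ℝⁿ} ( A∇v · ∇w + (b · ∇v) w + c v w ) dx whenever the integrand is integrable. Let G ⊆ ℝⁿ be open, let d > 0 and K > 0, let ω : ℝⁿ → ℝ be C^∞ with compact support contained in G, with 0 ≤ ω ≤ 1 and sup |∇ω| ≤ K/d, and let u : ℝⁿ → ℝ be C¹. Then there is a constant C = C(Λ, M, K) such that for every ε > 0, L(ωu, ωu) ≤ |L(u, ω²u)| + (C/(ε d²)) ‖u‖²_{L²(G)} + ε ‖ωu‖²_{H¹(ℝⁿ)}. (Estimate (3.5).) -/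

import Mathlib

open MeasureTheory Metric
open scoped ENNReal

/-- The `L²(S)` norm of a scalar function on `ℝⁿ`. -/
noncomputable def L2norm {n : ℕ} (S : Set (EuclideanSpace ℝ (Fin n)))
    (f : EuclideanSpace ℝ (Fin n) → ℝ) : ℝ :=
  (∫ x in S, f x ^ 2) ^ (1 / 2 : ℝ)

/-- The `L²(S)` norm of the (a.e. defined, extended by junk value `0`) gradient of a scalar
function on `ℝⁿ`; for Lipschitz functions this agrees a.e. with the Rademacher gradient. -/
noncomputable def gradL2norm {n : ℕ} (S : Set (EuclideanSpace ℝ (Fin n)))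
    (f : EuclideanSpace ℝ (Fin n) → ℝ) : ℝ :=
  (∫ x in S, ‖gradient f x‖ ^ 2) ^ (1 / 2 : ℝ)

/-- The `H¹(S)` norm. -/
noncomputable def H1norm {n : ℕ} (S : Set (EuclideanSpace ℝ (Fin n)))
    (f : EuclideanSpace ℝ (Fin n) → ℝ) : ℝ :=
  (L2norm S f ^ 2 + gradL2norm S f ^ 2) ^ (1 / 2 : ℝ)

/-- The bilinear form `L(v, w) = ∫_S ( A ∇v · ∇w + (b · ∇v) w + c v w ) dx`. -/
noncomputable def Lform {n : ℕ} (S : Set (EuclideanSpace ℝ (Fin n)))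
    (A : EuclideanSpace ℝ (Fin n) → Matrix (Fin n) (Fin n) ℝ)
    (b : EuclideanSpace ℝ (Fin n) → EuclideanSpace ℝ (Fin n))
    (c : EuclideanSpace ℝ (Fin n) → ℝ)
    (v w : EuclideanSpace ℝ (Fin n) → ℝ) : ℝ :=
  ∫ x in S, ((inner ℝ (Matrix.toEuclideanLin (A x) (gradient v x)) (gradient w x) : ℝ)
    + (inner ℝ (b x) (gradient v x) : ℝ) * w x + c x * v x * w x)

/-- The `L²(S)` norm, valued in `ℝ≥0∞` (so that non-square-integrable functions give `∞`). -/
noncomputable def eL2 {n : ℕ} (S : Set (EuclideanSpace ℝ (Fin n)))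
    (f : EuclideanSpace ℝ (Fin n) → ℝ) : ℝ≥0∞ :=
  eLpNorm f 2 (volume.restrict S)

/-- The `L²(S)` norm of the gradient, valued in `ℝ≥0∞`. -/
noncomputable def eGradL2 {n : ℕ} (S : Set (EuclideanSpace ℝ (Fin n)))
    (f : EuclideanSpace ℝ (Fin n) → ℝ) : ℝ≥0∞ :=
  eLpNorm (fun x => ‖gradient f x‖) 2 (volume.restrict S)

/-- The square of the `H¹(S)` norm, valued in `ℝ≥0∞`. -/
noncomputable def eH1sq {n : ℕ} (S : Set (EuclideanSpace ℝ (Fin n)))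
    (f : EuclideanSpace ℝ (Fin n) → ℝ) : ℝ≥0∞ :=
  eL2 S f ^ 2 + eGradL2 S f ^ 2

open scoped NNReal

section AuxLemmas
variable {n : ℕ}
local notation "E" => EuclideanSpace ℝ (Fin n)

lemma aux_grad_mul {f g : E → ℝ} {x : E} (hf : DifferentiableAt ℝ f x)
    (hg : DifferentiableAt ℝ g x) :
    gradient (fun y => f y * g y) x = f x • gradient g x + g x • gradient f x := by
  unfold gradient
  rw [fderiv_fun_mul hf hg, map_add, _root_.map_smul, _root_.map_smul]

lemma aux_support_gradient_subset (f : E → ℝ) :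
    Function.support (gradient f) ⊆ tsupport f := by
  intro x hx
  apply support_fderiv_subset ℝ (f := f)
  intro h0
  apply hx
  unfold gradient
  rw [h0, map_zero]

lemma aux_continuous_gradient {f : E → ℝ} (hf : ContDiff ℝ 1 f) :
    Continuous (gradient f) := by
  have : gradient f = fun x => (InnerProductSpace.toDual ℝ E).symm (fderiv ℝ f x) := rfl
  rw [this]
  exact (InnerProductSpace.toDual ℝ E).symm.continuous.comp (hf.continuous_fderiv one_ne_zero)

lemma aux_inner_toLin_eq (A : Matrix (Fin n) (Fin n) ℝ) (v w : E) :
    (inner ℝ (Matrix.toEuclideanLin A v) w : ℝ) = ∑ i, (∑ j, A i j * v j) * w i := by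
  rw [PiLp.inner_apply]
  simp [show ∀ i, Matrix.toEuclideanLin A v i = ∑ j, A i j * v j from fun i => rfl,
    RCLike.inner_apply, mul_comm]

lemma aux_meas_inner_toLin {A : E → Matrix (Fin n) (Fin n) ℝ}
    (hA : Measurable fun x => fun i j => A x i j) {v w : E → E}
    (hv : Continuous v) (hw : Continuous w) :
    Measurable fun x => (inner ℝ (Matrix.toEuclideanLin (A x) (v x)) (w x) : ℝ) := by
  simp only [aux_inner_toLin_eq]
  apply Finset.measurable_sum
  intro i _
  apply Measurable.mul
  · apply Finset.measurable_sum
    intro j _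
    exact ((hA.eval (a := i)).eval (a := j)).mul (by apply Continuous.measurable; fun_prop)
  · apply Continuous.measurable; fun_prop

lemma aux_sq_eLpNorm_eq {α : Type*} [MeasurableSpace α] (μ : Measure α) (f : α → ℝ) :
    eLpNorm f 2 μ ^ 2 = ∫⁻ x, ENNReal.ofReal (f x ^ 2) ∂μ := by
  have h := eLpNorm_nnreal_pow_eq_lintegral (μ := μ) (f := f) (p := 2) (by norm_num)
  have h2 : ((2 : ℝ≥0) : ℝ≥0∞) = 2 := by norm_num
  rw [h2] at h
  rw [← ENNReal.rpow_natCast _ 2]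
  push_cast at h ⊢
  rw [h]
  congr 1
  ext x
  rw [← ofReal_norm, Real.norm_eq_abs, ENNReal.ofReal_rpow_of_nonneg (abs_nonneg _) (by norm_num),
    Real.rpow_two, sq_abs]

lemma aux_ofReal_int_sq_le {α : Type*} [MeasurableSpace α] (μ : Measure α) (f : α → ℝ)
    (hf : Integrable (fun x => f x ^ 2) μ) :
    ENNReal.ofReal (∫ x, f x ^ 2 ∂μ) ≤ eLpNorm f 2 μ ^ 2 := by
  rw [aux_sq_eLpNorm_eq, ofReal_integral_eq_lintegral_ofReal hf
    (Filter.Eventually.of_forall fun x => sq_nonneg _)]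

/-- Pointwise bound for the integrand of the bilinear form. -/
lemma aux_abs_integrand_le {Λ M : ℝ} (hΛ : 0 ≤ Λ) (hM : 0 ≤ M)
    {Ax : Matrix (Fin n) (Fin n) ℝ} {bx : E} {cx : ℝ} {v w : E} {vv ww : ℝ}
    (hA : ∀ ξ, ‖Matrix.toEuclideanLin Ax ξ‖ ≤ Λ * ‖ξ‖) (hb : ‖bx‖ ≤ M) (hc : |cx| ≤ M)
    {Rv Rw Rvv Rww : ℝ} (h1 : ‖v‖ ≤ Rv) (h2 : ‖w‖ ≤ Rw) (h3 : |vv| ≤ Rvv) (h4 : |ww| ≤ Rww) :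
    |(inner ℝ (Matrix.toEuclideanLin Ax v) w : ℝ) + (inner ℝ bx v : ℝ) * ww + cx * vv * ww| ≤
      Λ * Rv * Rw + M * Rv * Rww + M * Rvv * Rww := by
  have hRv : 0 ≤ Rv := le_trans (norm_nonneg _) h1
  have hRw : 0 ≤ Rw := le_trans (norm_nonneg _) h2
  have hRvv : 0 ≤ Rvv := le_trans (abs_nonneg _) h3
  have hRww : 0 ≤ Rww := le_trans (abs_nonneg _) h4
  have e1 : |(inner ℝ (Matrix.toEuclideanLin Ax v) w : ℝ)| ≤ Λ * Rv * Rw := by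
    refine le_trans (abs_real_inner_le_norm _ _) ?_
    have := mul_le_mul_of_nonneg_right (hA v) (norm_nonneg w)
    have h2' := mul_le_mul (mul_le_mul_of_nonneg_left h1 hΛ) h2 (norm_nonneg w)
      (by positivity)
    nlinarith [norm_nonneg v, norm_nonneg w]
  have e2 : |(inner ℝ bx v : ℝ) * ww| ≤ M * Rv * Rww := by
    rw [abs_mul]
    have := abs_real_inner_le_norm bx v
    have h5 : |(inner ℝ bx v : ℝ)| ≤ M * Rv := by
      nlinarith [norm_nonneg bx, norm_nonneg v]
    exact mul_le_mul h5 h4 (abs_nonneg _) (by positivity)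
  have e3 : |cx * vv * ww| ≤ M * Rvv * Rww := by
    rw [abs_mul, abs_mul]
    exact mul_le_mul (mul_le_mul hc h3 (abs_nonneg _) hM) h4 (abs_nonneg _) (by positivity)
  have := abs_add_three ((inner ℝ (Matrix.toEuclideanLin Ax v) w : ℝ)) ((inner ℝ bx v : ℝ) * ww)
    (cx * vv * ww)
  linarith

/-- The key Young-inequality estimate. -/
lemma aux_key_ineq (Λ M ε K' a k gn w t1 t2 t3 t4 : ℝ)
    (hΛ : 0 ≤ Λ) (hM : 0 ≤ M) (hε : 0 < ε) (hK' : 0 < K')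
    (hk0 : 0 ≤ k) (hk : k ≤ K') (hgn : 0 ≤ gn)
    (hw0 : 0 ≤ w) (hw1 : w ≤ 1)
    (h1 : |t1| ≤ Λ * (k * gn)) (h2 : |t2| ≤ Λ * (gn * k))
    (h3 : |t3| ≤ Λ * (k * k)) (h4 : |t4| ≤ M * k) :
    a * t1 - a * t2 + a ^ 2 * t3 + w * a ^ 2 * t4 ≤
      (Λ + Λ ^ 2 / ε + M ^ 2 / (4 * ε)) * K' ^ 2 * a ^ 2 + ε * (gn ^ 2 + (w * a) ^ 2) := by
  set A := |a| with hA
  have hA0 : 0 ≤ A := abs_nonneg a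
  have haA : a ^ 2 = A ^ 2 := (sq_abs a).symm
  have key : ∀ t : ℝ, |t| ≤ Λ * (k * gn) → a * t ≤ Λ * K' * A * gn ∧ -(a * t) ≤ Λ * K' * A * gn := by
    intro t ht
    constructor <;>
    · have e1 : |a * t| ≤ A * (Λ * (k * gn)) := by
        rw [abs_mul]; exact mul_le_mul_of_nonneg_left ht hA0
      have e2 : A * (Λ * (k * gn)) ≤ Λ * K' * A * gn := by
        nlinarith [mul_nonneg (sub_nonneg.mpr hk) (mul_nonneg (mul_nonneg hΛ hA0) hgn)]
      linarith [neg_abs_le (a * t), le_abs_self (a * t), abs_nonneg (a * t)]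
  have k1 := (key t1 h1).1
  have k2 := (key t2 (by rwa [mul_comm gn k] at h2)).2
  have k3 : a ^ 2 * t3 ≤ Λ * K' ^ 2 * A ^ 2 := by
    have e1 : a ^ 2 * t3 ≤ a ^ 2 * |t3| := mul_le_mul_of_nonneg_left (le_abs_self _) (sq_nonneg a)
    have e2 : a ^ 2 * |t3| ≤ a ^ 2 * (Λ * (k * k)) := mul_le_mul_of_nonneg_left h3 (sq_nonneg a)
    have e3 : a ^ 2 * (Λ * (k * k)) ≤ Λ * K' ^ 2 * A ^ 2 := by
      rw [← haA]
      nlinarith [mul_le_mul hk hk hk0 hK'.le, mul_nonneg hΛ (sq_nonneg a)]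
    linarith
  have k4 : w * a ^ 2 * t4 ≤ M * K' * A * (w * A) := by
    have e1 : w * a ^ 2 * t4 ≤ w * a ^ 2 * |t4| :=
      mul_le_mul_of_nonneg_left (le_abs_self _) (by positivity)
    have e2 : w * a ^ 2 * |t4| ≤ w * a ^ 2 * (M * k) :=
      mul_le_mul_of_nonneg_left h4 (by positivity)
    have e3 : w * a ^ 2 * (M * k) ≤ M * K' * A * (w * A) := by
      rw [haA]
      nlinarith [mul_nonneg (sub_nonneg.mpr hk) (mul_nonneg (mul_nonneg hM hw0) (sq_nonneg A))]
    linarith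
  have y1 : Λ ^ 2 * K' ^ 2 * A ^ 2 / ε + ε * gn ^ 2 - 2 * (Λ * K' * A) * gn =
      (Λ * K' * A - ε * gn) ^ 2 / ε := by field_simp; ring
  have y2 : M ^ 2 * K' ^ 2 * A ^ 2 / (4 * ε) + ε * (w * A) ^ 2 - M * K' * A * (w * A) =
      (M * K' * A - 2 * ε * (w * A)) ^ 2 / (4 * ε) := by field_simp; ring
  have p1 : 0 ≤ (Λ * K' * A - ε * gn) ^ 2 / ε := by positivity
  have p2 : 0 ≤ (M * K' * A - 2 * ε * (w * A)) ^ 2 / (4 * ε) := by positivity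
  have hwA : (w * a) ^ 2 = (w * A) ^ 2 := by rw [mul_pow, mul_pow, haA]
  have goal_eq : (Λ + Λ ^ 2 / ε + M ^ 2 / (4 * ε)) * K' ^ 2 * a ^ 2 =
      Λ * K' ^ 2 * A ^ 2 + Λ ^ 2 * K' ^ 2 * A ^ 2 / ε + M ^ 2 * K' ^ 2 * A ^ 2 / (4 * ε) := by
    rw [haA]; field_simp
  rw [goal_eq, hwA]
  linarith

end AuxLemmas

set_option maxHeartbeats 1000000 in
/-- **Estimate (3.5):** there is `C = C(Λ, M, K)` such that for every `ε > 0`,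
`L(ωu, ωu) ≤ |L(u, ω²u)| + (C/(ε d²)) ‖u‖²_{L²(G)} + ε ‖ωu‖²_{H¹(ℝⁿ)}`
(the `L²`/`H¹` quantities on the right are taken in `ℝ≥0∞`, so the estimate is trivially
true when they are infinite). -/
theorem estimate_3_5
    (Λ M K : ℝ) (hΛ : 0 ≤ Λ) (hM : 0 ≤ M) (hK : 0 < K) :
    ∃ C : ℝ, 0 < C ∧
      ∀ (n : ℕ)
        (A : EuclideanSpace ℝ (Fin n) → Matrix (Fin n) (Fin n) ℝ)
        (b : EuclideanSpace ℝ (Fin n) → EuclideanSpace ℝ (Fin n))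
        (c : EuclideanSpace ℝ (Fin n) → ℝ),
        (Measurable fun x => fun i j => A x i j) → Measurable b → Measurable c →
        (∀ᵐ x ∂(volume : Measure (EuclideanSpace ℝ (Fin n))),
          ∀ ξ, ‖Matrix.toEuclideanLin (A x) ξ‖ ≤ Λ * ‖ξ‖) →
        (∀ᵐ x ∂(volume : Measure (EuclideanSpace ℝ (Fin n))), ‖b x‖ ≤ M) →
        (∀ᵐ x ∂(volume : Measure (EuclideanSpace ℝ (Fin n))), |c x| ≤ M) →
        ∀ G : Set (EuclideanSpace ℝ (Fin n)), IsOpen G →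
        ∀ d : ℝ, 0 < d →
        ∀ ω : EuclideanSpace ℝ (Fin n) → ℝ, ContDiff ℝ (⊤ : ℕ∞) ω →
          HasCompactSupport ω → tsupport ω ⊆ G →
          (∀ x, 0 ≤ ω x) → (∀ x, ω x ≤ 1) → (∀ x, ‖gradient ω x‖ ≤ K / d) →
        ∀ u : EuclideanSpace ℝ (Fin n) → ℝ, ContDiff ℝ 1 u →
        ∀ ε : ℝ, 0 < ε →
          ENNReal.ofReal
              (Lform Set.univ A b c (fun x => ω x * u x) (fun x => ω x * u x)) ≤
            ENNReal.ofReal |Lform Set.univ A b c u (fun x => ω x ^ 2 * u x)| +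
              ENNReal.ofReal (C / (ε * d ^ 2)) * eL2 G u ^ 2 +
              ENNReal.ofReal ε * eH1sq Set.univ (fun x => ω x * u x) := by
  refine ⟨(Λ * (Λ + 2 * M + 1) + Λ ^ 2 + M ^ 2 / 4 + 1) * K ^ 2, ?_, ?_⟩
  · have h1 : (1:ℝ) ≤ Λ * (Λ + 2 * M + 1) + Λ ^ 2 + M ^ 2 / 4 + 1 := by nlinarith
    nlinarith [mul_pos hK hK]
  intro n A b c hAm hbm hcm hAb hbb hcb G hG d hd ω hωC hωsupp hωG hω0 hω1 hωgrad u hu ε hε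
  set f : EuclideanSpace ℝ (Fin n) → ℝ := fun x => ω x * u x with hfdef
  have hd2 : (0:ℝ) < ε * d ^ 2 := by positivity
  have hω1' : ContDiff ℝ 1 ω := hωC.of_le (by exact_mod_cast le_top)
  have hωd : Differentiable ℝ ω := hω1'.differentiable one_ne_zero
  have hud : Differentiable ℝ u := hu.differentiable one_ne_zero
  have hfC : ContDiff ℝ 1 f := hω1'.mul hu
  have hfd : Differentiable ℝ f := hfC.differentiable one_ne_zero
  have hg : ∀ x, gradient f x = ω x • gradient u x + u x • gradient ω x :=
    fun x => aux_grad_mul (hωd x) (hud x)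
  have hsq : (fun x => ω x ^ 2 * u x) = fun x => ω x * f x := by
    funext x; rw [hfdef]; ring
  have hωfC : ContDiff ℝ 1 (fun x => ω x * f x) := hω1'.mul hfC
  have hh : ∀ x, gradient (fun x => ω x ^ 2 * u x) x
      = ω x • gradient f x + f x • gradient ω x := by
    rw [hsq]; exact fun x => aux_grad_mul (hωd x) (hfd x)
  have hgc : Continuous (gradient f) := aux_continuous_gradient hfC
  have hguc : Continuous (gradient u) := aux_continuous_gradient hu
  have hgωc : Continuous (gradient ω) := aux_continuous_gradient hω1'
  have hhc : Continuous (gradient (fun x => ω x ^ 2 * u x)) := by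
    rw [hsq]; exact aux_continuous_gradient hωfC
  set T : Set (EuclideanSpace ℝ (Fin n)) := tsupport ω with hTdef
  have hTc : IsCompact T := hωsupp
  have hTcl : IsClosed T := isClosed_tsupport ω
  have hTm : MeasurableSet T := hTcl.measurableSet
  have hsuppf : Function.support f ⊆ T := by
    intro x hx
    have hωx : ω x ≠ 0 := by
      intro h0; apply hx; rw [hfdef]; simp [h0]
    exact subset_closure (Function.mem_support.mpr hωx)
  have htsf : tsupport f ⊆ T := closure_minimal hsuppf hTcl
  have hωzero : ∀ x ∉ T, ω x = 0 := fun x hx => image_eq_zero_of_notMem_tsupport hx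
  have hfzero : ∀ x ∉ T, f x = 0 := by
    intro x hx; rw [hfdef]; simp [hωzero x hx]
  have hgωzero : ∀ x ∉ T, gradient ω x = 0 := by
    intro x hx
    by_contra h0
    exact hx (aux_support_gradient_subset ω h0)
  have hgfzero : ∀ x ∉ T, gradient f x = 0 := by
    intro x hx; by_contra h0
    exact hx (htsf (aux_support_gradient_subset f h0))
  have hsuppω2 : tsupport (fun x => ω x ^ 2 * u x) ⊆ T := by
    apply closure_minimal _ hTcl
    intro x hx
    have hωx : ω x ≠ 0 := by intro h0; apply hx; simp [h0]
    exact subset_closure (Function.mem_support.mpr hωx)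
  have hhzero : ∀ x ∉ T, gradient (fun x => ω x ^ 2 * u x) x = 0 := by
    intro x hx; by_contra h0
    exact hx (hsuppω2 (aux_support_gradient_subset _ h0))
  -- bounds on T
  obtain ⟨Ru0, hRu0⟩ := hTc.exists_bound_of_continuousOn hud.continuous.continuousOn
  obtain ⟨Rg0, hRg0⟩ := hTc.exists_bound_of_continuousOn hgc.continuousOn
  obtain ⟨Rgu0, hRgu0⟩ := hTc.exists_bound_of_continuousOn hguc.continuousOn
  obtain ⟨Rh0, hRh0⟩ := hTc.exists_bound_of_continuousOn hhc.continuousOn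
  set Ru := max Ru0 0 with hRudef
  set Rg := max Rg0 0 with hRgdef
  set Rgu := max Rgu0 0 with hRgudef
  set Rh := max Rh0 0 with hRhdef
  have hRu : ∀ x ∈ T, |u x| ≤ Ru := fun x hx => by
    rw [← Real.norm_eq_abs]; exact le_trans (hRu0 x hx) (le_max_left _ _)
  have hRg : ∀ x ∈ T, ‖gradient f x‖ ≤ Rg := fun x hx =>
    le_trans (hRg0 x hx) (le_max_left _ _)
  have hRgu : ∀ x ∈ T, ‖gradient u x‖ ≤ Rgu := fun x hx =>
    le_trans (hRgu0 x hx) (le_max_left _ _)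
  have hRh : ∀ x ∈ T, ‖gradient (fun x => ω x ^ 2 * u x) x‖ ≤ Rh := fun x hx =>
    le_trans (hRh0 x hx) (le_max_left _ _)
  have hωabs : ∀ x, |ω x| ≤ 1 := fun x => abs_le.mpr ⟨by linarith [hω0 x], hω1 x⟩
  have hfb : ∀ x ∈ T, |f x| ≤ Ru := by
    intro x hx
    have h1 : |f x| = |ω x| * |u x| := by rw [hfdef]; exact abs_mul _ _
    rw [h1]
    nlinarith [hRu x hx, abs_nonneg (u x), abs_nonneg (ω x), hωabs x]
  have hω2ub : ∀ x ∈ T, |ω x ^ 2 * u x| ≤ Ru := by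
    intro x hx
    rw [abs_mul]
    have h1 : |ω x ^ 2| ≤ 1 := by
      rw [abs_pow]; exact pow_le_one₀ (abs_nonneg _) (hωabs x)
    nlinarith [hRu x hx, abs_nonneg (u x), abs_nonneg (ω x ^ 2)]
  -- the two integrands
  set P₁ : EuclideanSpace ℝ (Fin n) → ℝ := fun x =>
    (inner ℝ (Matrix.toEuclideanLin (A x) (gradient f x)) (gradient f x) : ℝ)
      + (inner ℝ (b x) (gradient f x) : ℝ) * f x + c x * f x * f x with hP₁def
  set P₂ : EuclideanSpace ℝ (Fin n) → ℝ := fun x =>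
    (inner ℝ (Matrix.toEuclideanLin (A x) (gradient u x))
        (gradient (fun x => ω x ^ 2 * u x) x) : ℝ)
      + (inner ℝ (b x) (gradient u x) : ℝ) * (ω x ^ 2 * u x)
      + c x * u x * (ω x ^ 2 * u x) with hP₂def
  have hL1 : Lform Set.univ A b c f f = ∫ x, P₁ x := by
    unfold Lform
    rw [MeasureTheory.Measure.restrict_univ, hP₁def]
  have hL2 : Lform Set.univ A b c u (fun x => ω x ^ 2 * u x) = ∫ x, P₂ x := by
    unfold Lform
    rw [MeasureTheory.Measure.restrict_univ, hP₂def]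
  -- measurability
  have hfm : Measurable f := hfC.continuous.measurable
  have hum : Measurable u := hud.continuous.measurable
  have hω2um : Measurable (fun x => ω x ^ 2 * u x) :=
    ((hωC.continuous.pow 2).mul hud.continuous).measurable
  have hP₁m : AEStronglyMeasurable P₁ volume := by
    apply Measurable.aestronglyMeasurable
    rw [hP₁def]
    exact ((aux_meas_inner_toLin hAm hgc hgc).add
      ((hbm.inner hgc.measurable).mul hfm)).add ((hcm.mul hfm).mul hfm)
  have hP₂m : AEStronglyMeasurable P₂ volume := by
    apply Measurable.aestronglyMeasurable
    rw [hP₂def]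
    exact ((aux_meas_inner_toLin hAm hguc hhc).add
      ((hbm.inner hguc.measurable).mul hω2um)).add ((hcm.mul hum).mul hω2um)
  -- integrability of the two integrands
  have hindint : ∀ R : ℝ, Integrable (T.indicator fun _ => R) volume := by
    intro R
    rw [integrable_indicator_iff hTm]
    exact integrableOn_const hTc.measure_lt_top.ne
  have hP₁b : ∀ᵐ x ∂(volume : Measure (EuclideanSpace ℝ (Fin n))),
      ‖P₁ x‖ ≤ T.indicator (fun _ => Λ * Rg * Rg + M * Rg * Ru + M * Ru * Ru) x := by
    filter_upwards [hAb, hbb, hcb] with x hAx hbx hcx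
    rw [hP₁def, Real.norm_eq_abs]
    by_cases hxT : x ∈ T
    · rw [Set.indicator_of_mem hxT]
      exact aux_abs_integrand_le hΛ hM hAx hbx hcx (hRg x hxT) (hRg x hxT)
        (hfb x hxT) (hfb x hxT)
    · rw [Set.indicator_of_notMem hxT]
      simp [hgfzero x hxT, hfzero x hxT]
  have hP₂b : ∀ᵐ x ∂(volume : Measure (EuclideanSpace ℝ (Fin n))),
      ‖P₂ x‖ ≤ T.indicator (fun _ => Λ * Rgu * Rh + M * Rgu * Ru + M * Ru * Ru) x := by
    filter_upwards [hAb, hbb, hcb] with x hAx hbx hcx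
    rw [hP₂def, Real.norm_eq_abs]
    by_cases hxT : x ∈ T
    · rw [Set.indicator_of_mem hxT]
      exact aux_abs_integrand_le hΛ hM hAx hbx hcx (hRgu x hxT) (hRh x hxT)
        (hRu x hxT) (hω2ub x hxT)
    · rw [Set.indicator_of_notMem hxT]
      simp [hhzero x hxT, hωzero x hxT]
  have hP₁int : Integrable P₁ volume := Integrable.mono' (hindint _) hP₁m hP₁b
  have hP₂int : Integrable P₂ volume := Integrable.mono' (hindint _) hP₂m hP₂b
  -- integrability of the auxiliary functions
  have hcs_of : ∀ F : EuclideanSpace ℝ (Fin n) → ℝ, (∀ x ∉ T, F x = 0) →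
      HasCompactSupport F := by
    intro F hF
    apply IsCompact.of_isClosed_subset hTc (isClosed_tsupport F)
    apply closure_minimal _ hTcl
    intro x hx
    by_contra hxT
    exact hx (hF x hxT)
  have hint_f2 : Integrable (fun x => f x ^ 2) volume :=
    (hfC.continuous.pow 2).integrable_of_hasCompactSupport
      (hcs_of _ (fun x hx => by simp [hfzero x hx]))
  have hint_g2 : Integrable (fun x => ‖gradient f x‖ ^ 2) volume :=
    ((hgc.norm.pow 2)).integrable_of_hasCompactSupport
      (hcs_of _ (fun x hx => by simp [hgfzero x hx]))
  have hint_gf : Integrable (fun x => ‖gradient f x‖ ^ 2 + f x ^ 2) volume :=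
    hint_g2.add hint_f2
  have hint_u2T : IntegrableOn (fun x => u x ^ 2) T volume :=
    ((hud.continuous.pow 2).continuousOn).integrableOn_compact hTc
  -- the H¹ comparison
  have hH1 : ENNReal.ofReal (∫ x, f x ^ 2) + ENNReal.ofReal (∫ x, ‖gradient f x‖ ^ 2) ≤
      eH1sq Set.univ f := by
    unfold eH1sq eL2 eGradL2
    rw [MeasureTheory.Measure.restrict_univ]
    exact add_le_add (aux_ofReal_int_sq_le _ _ hint_f2) (aux_ofReal_int_sq_le _ _ hint_g2)
  have hFle : ∀ ε' : ℝ, 0 ≤ ε' → ε' ≤ ε →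
      ENNReal.ofReal (ε' * ∫ x, (‖gradient f x‖ ^ 2 + f x ^ 2)) ≤
        ENNReal.ofReal ε * eH1sq Set.univ f := by
    intro ε' h0 h1
    rw [ENNReal.ofReal_mul h0, integral_add hint_g2 hint_f2]
    refine mul_le_mul' (ENNReal.ofReal_le_ofReal h1)
      (le_trans ENNReal.ofReal_add_le ?_)
    rw [add_comm]
    exact hH1
  rcases le_or_gt ε (Λ + 2 * M + 1) with hεs | hεl
  · have hEid : ∀ x, P₁ x - P₂ x =
        u x * (inner ℝ (Matrix.toEuclideanLin (A x) (gradient ω x)) (gradient f x) : ℝ)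
          - u x * (inner ℝ (Matrix.toEuclideanLin (A x) (gradient f x)) (gradient ω x) : ℝ)
          + u x ^ 2 * (inner ℝ (Matrix.toEuclideanLin (A x) (gradient ω x)) (gradient ω x) : ℝ)
          + ω x * u x ^ 2 * (inner ℝ (b x) (gradient ω x) : ℝ) := by
      intro x
      simp only [hP₁def, hP₂def]
      rw [hh x]
      simp only [hg x]
      simp only [hfdef]
      simp only [map_add, _root_.map_smul, inner_add_left, inner_add_right,
        real_inner_smul_left, real_inner_smul_right, smul_eq_mul]
      ring
    set c₁ : ℝ := (Λ + Λ ^ 2 / ε + M ^ 2 / (4 * ε)) * (K / d) ^ 2 with hc₁def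
    have hc₁0 : 0 ≤ c₁ := by
      rw [hc₁def]
      apply mul_nonneg _ (by positivity)
      have h1 : 0 ≤ Λ ^ 2 / ε := by positivity
      have h2 : 0 ≤ M ^ 2 / (4 * ε) := by positivity
      linarith
    have hbound : ∀ᵐ x ∂(volume : Measure (EuclideanSpace ℝ (Fin n))),
        P₁ x - P₂ x ≤ T.indicator (fun y => c₁ * u y ^ 2) x
          + ε * (‖gradient f x‖ ^ 2 + f x ^ 2) := by
      filter_upwards [hAb, hbb] with x hAx hbx
      rw [hEid x]
      by_cases hxT : x ∈ T
      · rw [Set.indicator_of_mem hxT]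
        have t1b : |(inner ℝ (Matrix.toEuclideanLin (A x) (gradient ω x)) (gradient f x) : ℝ)|
            ≤ Λ * (‖gradient ω x‖ * ‖gradient f x‖) :=
          le_trans (abs_real_inner_le_norm _ _)
            (by rw [← mul_assoc]; exact mul_le_mul_of_nonneg_right (hAx _) (norm_nonneg _))
        have t2b : |(inner ℝ (Matrix.toEuclideanLin (A x) (gradient f x)) (gradient ω x) : ℝ)|
            ≤ Λ * (‖gradient f x‖ * ‖gradient ω x‖) :=
          le_trans (abs_real_inner_le_norm _ _)
            (by rw [← mul_assoc]; exact mul_le_mul_of_nonneg_right (hAx _) (norm_nonneg _))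
        have t3b : |(inner ℝ (Matrix.toEuclideanLin (A x) (gradient ω x)) (gradient ω x) : ℝ)|
            ≤ Λ * (‖gradient ω x‖ * ‖gradient ω x‖) :=
          le_trans (abs_real_inner_le_norm _ _)
            (by rw [← mul_assoc]; exact mul_le_mul_of_nonneg_right (hAx _) (norm_nonneg _))
        have t4b : |(inner ℝ (b x) (gradient ω x) : ℝ)| ≤ M * ‖gradient ω x‖ :=
          le_trans (abs_real_inner_le_norm _ _)
            (mul_le_mul_of_nonneg_right hbx (norm_nonneg _))
        have hKi := aux_key_ineq Λ M ε (K / d) (u x) (‖gradient ω x‖) (‖gradient f x‖)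
          (ω x) _ _ _ _ hΛ hM hε (div_pos hK hd) (norm_nonneg _) (hωgrad x) (norm_nonneg _)
          (hω0 x) (hω1 x) t1b t2b t3b t4b
        rw [hc₁def]
        have hfx : f x ^ 2 = (ω x * u x) ^ 2 := by rw [hfdef]
        rw [hfx]
        linarith [hKi]
      · rw [Set.indicator_of_notMem hxT, hgωzero x hxT]
        simp only [inner_zero_left, inner_zero_right, map_zero, mul_zero, zero_add, add_zero,
          sub_zero, zero_sub, neg_zero, zero_mul, sub_self]
        positivity
    have hDint : Integrable (T.indicator fun y => c₁ * u y ^ 2) volume := by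
      rw [integrable_indicator_iff hTm]
      exact hint_u2T.const_mul _
    have hEint : Integrable (fun x => P₁ x - P₂ x) volume := hP₁int.sub hP₂int
    have step1 : ∫ x, P₁ x ≤ (∫ x, P₂ x)
        + (c₁ * ∫ x in T, u x ^ 2) + ε * ∫ x, (‖gradient f x‖ ^ 2 + f x ^ 2) := by
      have hQint : Integrable (fun x => T.indicator (fun y => c₁ * u y ^ 2) x
          + ε * (‖gradient f x‖ ^ 2 + f x ^ 2)) volume := hDint.add (hint_gf.const_mul ε)
      have h := integral_mono_ae hEint hQint hbound
      rw [integral_sub hP₁int hP₂int, integral_add hDint (hint_gf.const_mul ε),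
        integral_indicator hTm, integral_const_mul, integral_const_mul] at h
      linarith
    have hc₁C : c₁ ≤ (Λ * (Λ + 2 * M + 1) + Λ ^ 2 + M ^ 2 / 4 + 1) * K ^ 2 / (ε * d ^ 2) := by
      rw [le_div_iff₀ hd2, hc₁def]
      have heq : (Λ + Λ ^ 2 / ε + M ^ 2 / (4 * ε)) * (K / d) ^ 2 * (ε * d ^ 2)
          = (Λ * ε + Λ ^ 2 + M ^ 2 / 4) * K ^ 2 := by
        field_simp
      rw [heq]
      nlinarith [mul_nonneg (mul_nonneg hΛ (sub_nonneg.mpr hεs)) (sq_nonneg K), sq_nonneg K]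
    have hIT : ENNReal.ofReal (∫ x in T, u x ^ 2) ≤ eL2 G u ^ 2 := by
      unfold eL2
      rw [aux_sq_eLpNorm_eq, ofReal_integral_eq_lintegral_ofReal hint_u2T
        (Filter.Eventually.of_forall fun x => sq_nonneg _)]
      exact lintegral_mono' (Measure.restrict_mono hωG le_rfl) le_rfl
    rw [hL1, hL2]
    calc ENNReal.ofReal (∫ x, P₁ x)
        ≤ ENNReal.ofReal ((∫ x, P₂ x) + (c₁ * ∫ x in T, u x ^ 2)
            + ε * ∫ x, (‖gradient f x‖ ^ 2 + f x ^ 2)) := ENNReal.ofReal_le_ofReal step1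
      _ ≤ ENNReal.ofReal ((∫ x, P₂ x) + (c₁ * ∫ x in T, u x ^ 2))
            + ENNReal.ofReal (ε * ∫ x, (‖gradient f x‖ ^ 2 + f x ^ 2)) := ENNReal.ofReal_add_le
      _ ≤ ENNReal.ofReal (∫ x, P₂ x) + ENNReal.ofReal (c₁ * ∫ x in T, u x ^ 2)
            + ENNReal.ofReal (ε * ∫ x, (‖gradient f x‖ ^ 2 + f x ^ 2)) :=
          add_le_add_left ENNReal.ofReal_add_le _
      _ ≤ ENNReal.ofReal |∫ x, P₂ x|
            + ENNReal.ofReal ((Λ * (Λ + 2 * M + 1) + Λ ^ 2 + M ^ 2 / 4 + 1) * K ^ 2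
              / (ε * d ^ 2)) * eL2 G u ^ 2
            + ENNReal.ofReal ε * eH1sq Set.univ f := by
          refine add_le_add (add_le_add (ENNReal.ofReal_le_ofReal (le_abs_self _)) ?_)
            (hFle ε hε.le le_rfl)
          rw [ENNReal.ofReal_mul hc₁0]
          exact mul_le_mul' (ENNReal.ofReal_le_ofReal hc₁C) hIT
  · -- large ε : direct estimate
    have hpt : ∀ᵐ x ∂(volume : Measure (EuclideanSpace ℝ (Fin n))),
        P₁ x ≤ (Λ + 2 * M + 1) * (‖gradient f x‖ ^ 2 + f x ^ 2) := by
      filter_upwards [hAb, hbb, hcb] with x hAx hbx hcx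
      have h := aux_abs_integrand_le hΛ hM hAx hbx hcx (le_refl ‖gradient f x‖)
        (le_refl ‖gradient f x‖) (le_refl |f x|) (le_refl |f x|)
      simp only [hP₁def]
      have h2 := le_abs_self ((inner ℝ (Matrix.toEuclideanLin (A x) (gradient f x))
        (gradient f x) : ℝ) + (inner ℝ (b x) (gradient f x) : ℝ) * f x + c x * f x * f x)
      nlinarith [mul_nonneg hM (sq_nonneg (‖gradient f x‖ - |f x|)), sq_abs (f x),
        abs_nonneg (f x), norm_nonneg (gradient f x), mul_nonneg hΛ (sq_nonneg (f x)),
        mul_nonneg hM (sq_nonneg (f x)), mul_nonneg hM (sq_nonneg ‖gradient f x‖),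
        sq_nonneg (f x), sq_nonneg ‖gradient f x‖]
    have hmono : ∫ x, P₁ x ≤ (Λ + 2 * M + 1) * ∫ x, (‖gradient f x‖ ^ 2 + f x ^ 2) := by
      have h := integral_mono_ae hP₁int (hint_gf.const_mul (Λ + 2 * M + 1)) hpt
      rwa [integral_const_mul] at h
    rw [hL1]
    refine le_trans (le_trans (ENNReal.ofReal_le_ofReal hmono)
      (hFle _ (by linarith) hεl.le)) ?_
    exact le_add_left le_rfl
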